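/- Let G be a finite p-group whose non-central elements all have conjugacy classes of size p^m, and let H be a subgroup containing Z(G) with [H : Z(G)] = pⁱ. Then d(H,G) = (p^m + pⁱ − 1)/p^{m+i}. -/

import Mathlib

/-- The relative commutativity degree `d(H,G)` of a subgroup `H` of a group `G`. -/
noncomputable def relCommDeg {G : Type*} [Group G] (H : Subgroup G) : ℚ :=
  (Nat.card {p : H × G // (p.1 : G) * p.2 = p.2 * (p.1 : G)} : ℚ) /
    ((Nat.card H : ℚ) * (Nat.card G : ℚ))

/-- The set `D(G)` of all relative commutativity degrees of `G`. -/
noncomputable def commDegSet (G : Type*) [Group G] : Set ℚ :=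
  {q | ∃ H : Subgroup G, relCommDeg H = q}

/-- Orbit–stabilizer: size of conjugacy class times size of centralizer is `|G|`. -/
lemma conjClass_mul_centralizer_card {G : Type*} [Group G] [Finite G] (x : G) :
    Nat.card {y : G // IsConj x y} * Nat.card (Subgroup.centralizer {x} : Subgroup G)
      = Nat.card G := by
  classical
  have e1 : {y : G // IsConj x y} ≃ MulAction.orbit (ConjAct G) x :=
    Equiv.subtypeEquivRight fun y => by
      rw [ConjAct.mem_orbit_conjAct, isConj_comm]
  have e2 : (Subgroup.centralizer {x} : Subgroup G) ≃
      MulAction.stabilizer (ConjAct G) x :=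
    Equiv.subtypeEquiv (ConjAct.toConjAct (G := G)).toEquiv fun g => by
      rw [Subgroup.centralizer_eq_comap_stabilizer]; rfl
  have := Fintype.ofFinite G
  rw [Nat.card_congr e1, Nat.card_congr e2, Nat.card_eq_fintype_card,
    Nat.card_eq_fintype_card, Nat.card_eq_fintype_card]
  exact MulAction.card_orbit_mul_card_stabilizer_eq_card_group (ConjAct G) x

theorem relCommDeg_of_two_class_sizes (G : Type*) [Group G] [Finite G]
    (p m i : ℕ) (hp : p.Prime) (hpG : IsPGroup p G)
    (hcl : ∀ g : G, g ∉ Subgroup.center G →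
      Nat.card {x : G // IsConj g x} = p ^ m)
    (H : Subgroup G) (hZH : Subgroup.center G ≤ H)
    (hi : (Subgroup.center G).relIndex H = p ^ i) :
    relCommDeg H = ((p : ℚ) ^ m + (p : ℚ) ^ i - 1) / (p : ℚ) ^ (m + i) := by
  classical
  have := Fintype.ofFinite G
  set Z := Subgroup.center G with hZ
  set z := Nat.card Z with hz
  set gc := Nat.card G with hgc
  set hc := Nat.card H with hhc
  -- |H| = z * p^i
  have hH : hc = p ^ i * z := by
    have h1 : (Z.subgroupOf H).index * Nat.card (Z.subgroupOf H) = Nat.card H :=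
      Subgroup.index_mul_card _
    have h2 : Nat.card (Z.subgroupOf H) = z :=
      Nat.card_congr (Subgroup.subgroupOfEquivOfLe hZH).toEquiv
    rw [h2] at h1
    rw [hhc, ← h1, Subgroup.relIndex] at *
    rw [hi]
  -- counting the pairs
  set N := Nat.card {q : H × G // (q.1 : G) * q.2 = q.2 * (q.1 : G)} with hN
  have ecount : N = ∑ x : H, Nat.card {g : G // (x : G) * g = g * (x : G)} := by
    have e : {q : H × G // (q.1 : G) * q.2 = q.2 * (q.1 : G)} ≃
        Σ x : H, {g : G // (x : G) * g = g * (x : G)} :=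
      { toFun := fun q => ⟨q.1.1, q.1.2, q.2⟩
        invFun := fun s => ⟨(s.1, s.2.1), s.2.2⟩
        left_inv := fun q => rfl
        right_inv := fun s => rfl }
    rw [hN, Nat.card_congr e, Nat.card_eq_fintype_card, Fintype.card_sigma]
    exact Finset.sum_congr rfl fun x _ => (Nat.card_eq_fintype_card).symm
  have hcent : ∀ x : G, Nat.card {g : G // x * g = g * x}
      = Nat.card (Subgroup.centralizer {x} : Subgroup G) := by
    intro x
    exact Nat.card_congr (Equiv.subtypeEquivRight fun g => by
      simp [Subgroup.mem_centralizer_iff])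
  -- the key counting identity
  have key : p ^ m * N + z * gc = z * (p ^ m * gc) + hc * gc := by
    have hsplit : ∀ x : H,
        p ^ m * Nat.card {g : G // (x : G) * g = g * (x : G)} =
          if (x : G) ∈ Z then p ^ m * gc else gc := by
      intro x
      by_cases hx : (x : G) ∈ Z
      · rw [if_pos hx, hcent]
        congr 1
        have : Subgroup.centralizer {(x : G)} = ⊤ :=
          Subgroup.centralizer_eq_top_iff_subset.mpr (by simpa using hx)
        rw [this, hgc]
        exact Nat.card_congr Subgroup.topEquiv.toEquiv
      · rw [if_neg hx, hcent]
        have := conjClass_mul_centralizer_card (x : G)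
        rw [hcl _ hx] at this
        rw [this, hgc]
    have hsum : p ^ m * N = ∑ x : H, if (x : G) ∈ Z then p ^ m * gc else gc := by
      rw [ecount, Finset.mul_sum]
      exact Finset.sum_congr rfl fun x _ => hsplit x
    have hcardZ : (Finset.univ.filter (fun x : H => (x : G) ∈ Z)).card = z := by
      have e3 : Z ≃ {x : H // (x : G) ∈ Z} :=
        (Subgroup.subgroupOfEquivOfLe hZH).toEquiv.symm.trans
          (Equiv.subtypeEquivRight fun x => Subgroup.mem_subgroupOf)
      rw [hz, Nat.card_congr e3, Nat.card_eq_fintype_card, Fintype.card_subtype]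
    rw [hsum, Finset.sum_ite, Finset.sum_const, Finset.sum_const, smul_eq_mul, smul_eq_mul,
      hcardZ, Finset.filter_not, Finset.card_sdiff_of_subset (Finset.filter_subset _ _), hcardZ,
      Finset.card_univ, ← Nat.card_eq_fintype_card, ← hhc]
    have hle : z ≤ hc := by rw [hH]; exact Nat.le_mul_of_pos_left _ (pow_pos hp.pos i)
    zify [hle]
    ring
  -- positivity
  have hp0 : (p : ℚ) ≠ 0 := Nat.cast_ne_zero.mpr hp.pos.ne'
  have hz0 : (z : ℚ) ≠ 0 := Nat.cast_ne_zero.mpr Nat.card_pos.ne'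
  have hg0 : (gc : ℚ) ≠ 0 := Nat.cast_ne_zero.mpr Nat.card_pos.ne'
  have keyQ : (p : ℚ) ^ m * N + z * gc = z * ((p : ℚ) ^ m * gc) + hc * gc := by
    exact_mod_cast congrArg (Nat.cast : ℕ → ℚ) key
  have hHQ : (hc : ℚ) = (p : ℚ) ^ i * z := by exact_mod_cast congrArg (Nat.cast : ℕ → ℚ) hH
  have hh0 : (hc : ℚ) ≠ 0 := by
    rw [hHQ]; positivity
  rw [relCommDeg]
  rw [show (Nat.card {q : H × G // (q.1 : G) * q.2 = q.2 * (q.1 : G)} : ℚ) = (N : ℚ) from rfl]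
  rw [div_eq_div_iff (by positivity) (by positivity)]
  rw [pow_add]
  linear_combination ((p : ℚ) ^ i) * keyQ + (1 - (p : ℚ) ^ m) * (gc : ℚ) * hHQ
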